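/- (First-moment orthogonality for Haar random 2-qubit gates.) Let μ be the Haar probability measure on the compact group U(4) = Matrix.unitaryGroup (Fin 4) ℂ. Let p, q, r, s be normalized 2-qubit Paulis. If p ≠ r or q ≠ s, then ∫ Tr(p·U·q·U†) · Tr(r·U·s·U†) dμ(U) = 0. -/

import Mathlib

open Matrix MeasureTheory

/-- Labels for the four single-qubit Pauli matrices. -/
inductive PauliLabel : Type
  | I | X | Y | Z
  deriving DecidableEq

instance instFintypePauliLabel : Fintype PauliLabel :=
  ⟨{PauliLabel.I, PauliLabel.X, PauliLabel.Y, PauliLabel.Z}, fun x => by cases x <;> simp⟩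

/-- The single-qubit Pauli matrices over `ℂ`. -/
noncomputable def pauliMat : PauliLabel → Matrix (Fin 2) (Fin 2) ℂ
  | PauliLabel.I => !![1, 0; 0, 1]
  | PauliLabel.X => !![0, 1; 1, 0]
  | PauliLabel.Y => !![0, -Complex.I; Complex.I, 0]
  | PauliLabel.Z => !![1, 0; 0, -1]

/-- The Kronecker product of two `2×2` complex matrices, written out as a `4×4` matrix
(rows/columns ordered as `00, 01, 10, 11`). -/
noncomputable def kron2 (A B : Matrix (Fin 2) (Fin 2) ℂ) : Matrix (Fin 4) (Fin 4) ℂ :=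
  !![A 0 0 * B 0 0, A 0 0 * B 0 1, A 0 1 * B 0 0, A 0 1 * B 0 1;
     A 0 0 * B 1 0, A 0 0 * B 1 1, A 0 1 * B 1 0, A 0 1 * B 1 1;
     A 1 0 * B 0 0, A 1 0 * B 0 1, A 1 1 * B 0 0, A 1 1 * B 0 1;
     A 1 0 * B 1 0, A 1 0 * B 1 1, A 1 1 * B 1 0, A 1 1 * B 1 1]

/-- The 2-qubit Pauli string `σ_a ⊗ σ_b`, as a `4×4` complex matrix. -/
noncomputable def pauli2 (a b : PauliLabel) : Matrix (Fin 4) (Fin 4) ℂ :=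
  kron2 (pauliMat a) (pauliMat b)

lemma kron2_mul (A B C D : Matrix (Fin 2) (Fin 2) ℂ) :
    kron2 A B * kron2 C D = kron2 (A * C) (B * D) := by
  ext i j
  fin_cases i <;> fin_cases j <;>
    simp [kron2, Matrix.mul_apply, Fin.sum_univ_four, Fin.sum_univ_two] <;> ring

lemma kron2_star (A B : Matrix (Fin 2) (Fin 2) ℂ) :
    star (kron2 A B) = kron2 (star A) (star B) := by
  ext i j
  fin_cases i <;> fin_cases j <;>
    simp [kron2, Matrix.star_eq_conjTranspose, Matrix.conjTranspose_apply]

lemma kron2_one : kron2 1 1 = 1 := by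
  ext i j
  fin_cases i <;> fin_cases j <;>
    simp [kron2, Matrix.one_apply, Matrix.vecHead, Matrix.vecTail]

lemma pauliMat_mul_star (a : PauliLabel) : pauliMat a * star (pauliMat a) = 1 := by
  cases a <;>
    · ext i j
      fin_cases i <;> fin_cases j <;>
        simp [pauliMat, Matrix.mul_apply, Fin.sum_univ_two, Matrix.one_apply,
          Matrix.star_eq_conjTranspose, Matrix.conjTranspose_apply]

/-- Every 2-qubit Pauli string is a unitary `4×4` matrix. -/
lemma pauli2_mem_unitaryGroup (a b : PauliLabel) :
    pauli2 a b ∈ Matrix.unitaryGroup (Fin 4) ℂ := by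
  rw [Matrix.mem_unitaryGroup_iff, pauli2, kron2_star, kron2_mul,
    pauliMat_mul_star, pauliMat_mul_star, kron2_one]

/-- The 2-qubit Pauli string `σ_a ⊗ σ_b` as an element of the unitary group `U(4)`. -/
noncomputable def pauli2U (a b : PauliLabel) : Matrix.unitaryGroup (Fin 4) ℂ :=
  ⟨pauli2 a b, pauli2_mem_unitaryGroup a b⟩

/-- The normalized 2-qubit Pauli `(σ_a ⊗ σ_b) / 2`. -/
noncomputable def npauli2 (p : PauliLabel × PauliLabel) : Matrix (Fin 4) (Fin 4) ℂ :=
  (2 : ℂ)⁻¹ • pauli2 p.1 p.2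

section Aux

/-- `true` iff the single-qubit Paulis `a`, `b` commute. -/
def csign : PauliLabel → PauliLabel → Bool :=
  fun a b => a = PauliLabel.I ∨ b = PauliLabel.I ∨ a = b

/-- The commutation sign `±1` of two single-qubit Paulis. -/
noncomputable def cval (a b : PauliLabel) : ℂ := if csign a b then 1 else -1

lemma cval_sq (a b : PauliLabel) : cval a b * cval a b = 1 := by
  unfold cval; split_ifs <;> norm_num

lemma pauliMat_comm (v a : PauliLabel) :
    pauliMat v * pauliMat a = cval v a • (pauliMat a * pauliMat v) := by
  cases v <;> cases a <;>
    · ext i j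
      fin_cases i <;> fin_cases j <;>
        simp [pauliMat, cval, csign, Matrix.mul_apply, Fin.sum_univ_two]

lemma kron2_smul_left (c : ℂ) (A B : Matrix (Fin 2) (Fin 2) ℂ) :
    kron2 (c • A) B = c • kron2 A B := by
  ext i j
  fin_cases i <;> fin_cases j <;> simp [kron2] <;> ring

lemma kron2_smul_right (c : ℂ) (A B : Matrix (Fin 2) (Fin 2) ℂ) :
    kron2 A (c • B) = c • kron2 A B := by
  ext i j
  fin_cases i <;> fin_cases j <;> simp [kron2] <;> ring

/-- Commutation of two 2-qubit Pauli strings, with the product sign. -/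
lemma pauli2_comm (v1 v2 a b : PauliLabel) :
    pauli2 v1 v2 * pauli2 a b =
      (cval v1 a * cval v2 b) • (pauli2 a b * pauli2 v1 v2) := by
  rw [pauli2, pauli2, kron2_mul, kron2_mul, pauliMat_comm v1 a, pauliMat_comm v2 b,
    kron2_smul_left, kron2_smul_right, smul_smul]

lemma pauli2_mul_conjTranspose (a b : PauliLabel) :
    pauli2 a b * (pauli2 a b)ᴴ = 1 := by
  have := pauli2_mem_unitaryGroup a b
  rw [Matrix.mem_unitaryGroup_iff] at this
  simpa [Matrix.star_eq_conjTranspose] using this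

lemma conjTranspose_mul_pauli2 (a b : PauliLabel) :
    (pauli2 a b)ᴴ * pauli2 a b = 1 := by
  have := pauli2_mem_unitaryGroup a b
  rw [Matrix.mem_unitaryGroup_iff'] at this
  simpa [Matrix.star_eq_conjTranspose] using this

/-- Conjugation of one Pauli string by another gives a sign. -/
lemma pauli2_conj (v1 v2 a b : PauliLabel) :
    pauli2 v1 v2 * pauli2 a b * (pauli2 v1 v2)ᴴ =
      (cval v1 a * cval v2 b) • pauli2 a b := by
  rw [pauli2_comm v1 v2 a b, smul_mul_assoc, mul_assoc, pauli2_mul_conjTranspose, mul_one]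

lemma pauli2_conj' (v1 v2 a b : PauliLabel) :
    (pauli2 v1 v2)ᴴ * pauli2 a b * pauli2 v1 v2 =
      (cval v1 a * cval v2 b) • pauli2 a b := by
  have h := pauli2_comm v1 v2 a b
  have h2 : pauli2 a b * pauli2 v1 v2 =
      (cval v1 a * cval v2 b) • (pauli2 v1 v2 * pauli2 a b) := by
    rw [h, smul_smul, mul_mul_mul_comm, cval_sq, cval_sq, one_mul, one_smul]
  rw [mul_assoc, h2, mul_smul_comm, ← mul_assoc, conjTranspose_mul_pauli2, one_mul]

/-- The key left-translation covariance of the trace expression. -/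
lemma trace_left (v1 v2 : PauliLabel) (p q : PauliLabel × PauliLabel)
    (U : Matrix (Fin 4) (Fin 4) ℂ) :
    (npauli2 p * (pauli2 v1 v2 * U) * npauli2 q * (pauli2 v1 v2 * U)ᴴ).trace =
      (cval v1 p.1 * cval v2 p.2) * (npauli2 p * U * npauli2 q * Uᴴ).trace := by
  set V := pauli2 v1 v2 with hV
  set χ := cval v1 p.1 * cval v2 p.2 with hχ
  have key : Vᴴ * npauli2 p * V = χ • npauli2 p := by
    rw [npauli2, Matrix.mul_smul, Matrix.smul_mul, pauli2_conj', smul_comm]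
  calc (npauli2 p * (V * U) * npauli2 q * (V * U)ᴴ).trace
      = ((npauli2 p * (V * U) * npauli2 q * Uᴴ) * Vᴴ).trace := by
        rw [Matrix.conjTranspose_mul, ← mul_assoc]
    _ = (Vᴴ * (npauli2 p * (V * U) * npauli2 q * Uᴴ)).trace := by
        rw [Matrix.trace_mul_comm]
    _ = ((Vᴴ * npauli2 p * V) * (U * npauli2 q * Uᴴ)).trace := by
        simp only [mul_assoc]
    _ = (χ • (npauli2 p * (U * npauli2 q * Uᴴ))).trace := by rw [key, Matrix.smul_mul]
    _ = χ * (npauli2 p * U * npauli2 q * Uᴴ).trace := by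
        rw [Matrix.trace_smul, smul_eq_mul]; simp only [mul_assoc]

/-- The key right-translation covariance of the trace expression. -/
lemma trace_right (v1 v2 : PauliLabel) (p q : PauliLabel × PauliLabel)
    (U : Matrix (Fin 4) (Fin 4) ℂ) :
    (npauli2 p * (U * pauli2 v1 v2) * npauli2 q * (U * pauli2 v1 v2)ᴴ).trace =
      (cval v1 q.1 * cval v2 q.2) * (npauli2 p * U * npauli2 q * Uᴴ).trace := by
  set V := pauli2 v1 v2 with hV
  set χ := cval v1 q.1 * cval v2 q.2 with hχ
  have key : V * npauli2 q * Vᴴ = χ • npauli2 q := by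
    rw [npauli2, Matrix.mul_smul, Matrix.smul_mul, pauli2_conj, smul_comm]
  calc (npauli2 p * (U * V) * npauli2 q * (U * V)ᴴ).trace
      = (npauli2 p * (U * ((V * npauli2 q * Vᴴ) * Uᴴ))).trace := by
        rw [Matrix.conjTranspose_mul]; simp only [mul_assoc]
    _ = (npauli2 p * (U * ((χ • npauli2 q) * Uᴴ))).trace := by rw [key]
    _ = χ * (npauli2 p * U * npauli2 q * Uᴴ).trace := by
        rw [Matrix.smul_mul, Matrix.mul_smul, Matrix.mul_smul, Matrix.trace_smul,
          smul_eq_mul]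
        simp only [mul_assoc]

lemma exists_sign_left (p r : PauliLabel × PauliLabel) (h : p ≠ r) :
    ∃ v1 v2 : PauliLabel,
      (cval v1 p.1 * cval v2 p.2) * (cval v1 r.1 * cval v2 r.2) = -1 := by
  have key : ∃ v1 v2 : PauliLabel,
      xor (csign v1 p.1) (csign v2 p.2) ≠ xor (csign v1 r.1) (csign v2 r.2) := by
    revert h; revert p r; decide
  obtain ⟨v1, v2, hx⟩ := key
  refine ⟨v1, v2, ?_⟩
  revert hx
  unfold cval
  cases hb1 : csign v1 p.1 <;> cases hb2 : csign v2 p.2 <;>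
    cases hb3 : csign v1 r.1 <;> cases hb4 : csign v2 r.2 <;> simp <;> norm_num

end Aux

section Instances

open scoped Topology

lemma unitaryGroup_isCompact : IsCompact ((Matrix.unitaryGroup (Fin 4) ℂ : Set (Matrix (Fin 4) (Fin 4) ℂ))) := by
  have hK : IsCompact {A : Matrix (Fin 4) (Fin 4) ℂ | ∀ i j, A i j ∈ Metric.closedBall (0 : ℂ) 1} := by
    have : {A : Matrix (Fin 4) (Fin 4) ℂ | ∀ i j, A i j ∈ Metric.closedBall (0 : ℂ) 1} =
        Set.univ.pi (fun _ : Fin 4 => Set.univ.pi fun _ : Fin 4 => Metric.closedBall (0 : ℂ) 1) := by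
      ext A
      exact ⟨fun h i _ j _ => h i j, fun h i j => h i trivial j trivial⟩
    rw [this]
    exact isCompact_univ_pi fun i => isCompact_univ_pi fun j => isCompact_closedBall 0 1
  refine IsCompact.of_isClosed_subset hK ?_ ?_
  · have h1 : IsClosed {A : Matrix (Fin 4) (Fin 4) ℂ | star A * A = 1} :=
      isClosed_singleton.preimage ((continuous_id.matrix_conjTranspose).matrix_mul continuous_id)
    have h2 : IsClosed {A : Matrix (Fin 4) (Fin 4) ℂ | A * star A = 1} :=
      isClosed_singleton.preimage (continuous_id.matrix_mul (continuous_id.matrix_conjTranspose))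
    have : (Matrix.unitaryGroup (Fin 4) ℂ : Set (Matrix (Fin 4) (Fin 4) ℂ)) =
        {A | star A * A = 1} ∩ {A | A * star A = 1} := by
      ext A
      simp only [SetLike.mem_coe, Set.mem_inter_iff, Set.mem_setOf_eq]
      exact Unitary.mem_iff
    rw [this]
    exact h1.inter h2
  · intro A hA i j
    simpa using entry_norm_bound_of_unitary hA i j

instance : CompactSpace (Matrix.unitaryGroup (Fin 4) ℂ) :=
  isCompact_iff_compactSpace.mp unitaryGroup_isCompact

instance : IsTopologicalGroup (Matrix.unitaryGroup (Fin 4) ℂ) where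
  continuous_inv := by
    apply continuous_induced_rng.2
    have key : (Subtype.val ∘ fun a : Matrix.unitaryGroup (Fin 4) ℂ => a⁻¹) =
        fun U : Matrix.unitaryGroup (Fin 4) ℂ => star ((U : Matrix (Fin 4) (Fin 4) ℂ)) := by
      funext U; rfl
    rw [key]
    exact continuous_star.comp continuous_subtype_val

end Instances

/-- First-moment orthogonality for Haar random 2-qubit gates: for the Haar probability
measure `μ` on `U(4)` and normalized 2-qubit Paulis `p, q, r, s` with `p ≠ r` or `q ≠ s`,
`∫ Tr(p·U·q·U†) · Tr(r·U·s·U†) dμ(U) = 0`. -/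
theorem haar_first_moment_orthogonality
    [MeasurableSpace (Matrix.unitaryGroup (Fin 4) ℂ)]
    [BorelSpace (Matrix.unitaryGroup (Fin 4) ℂ)]
    (μ : Measure (Matrix.unitaryGroup (Fin 4) ℂ))
    [μ.IsHaarMeasure] [IsProbabilityMeasure μ]
    (p q r s : PauliLabel × PauliLabel) (h : p ≠ r ∨ q ≠ s) :
    ∫ U : Matrix.unitaryGroup (Fin 4) ℂ,
      (npauli2 p * (U : Matrix (Fin 4) (Fin 4) ℂ) * npauli2 q *
        (U : Matrix (Fin 4) (Fin 4) ℂ)ᴴ).trace *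
      (npauli2 r * (U : Matrix (Fin 4) (Fin 4) ℂ) * npauli2 s *
        (U : Matrix (Fin 4) (Fin 4) ℂ)ᴴ).trace ∂μ = 0 := by
  set f : Matrix.unitaryGroup (Fin 4) ℂ → ℂ := fun U =>
    (npauli2 p * (U : Matrix (Fin 4) (Fin 4) ℂ) * npauli2 q *
      (U : Matrix (Fin 4) (Fin 4) ℂ)ᴴ).trace *
    (npauli2 r * (U : Matrix (Fin 4) (Fin 4) ℂ) * npauli2 s *
      (U : Matrix (Fin 4) (Fin 4) ℂ)ᴴ).trace with hf
  show ∫ U, f U ∂μ = 0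
  rcases h with hpr | hqs
  · obtain ⟨v1, v2, hv⟩ := exists_sign_left p r hpr
    set V : Matrix.unitaryGroup (Fin 4) ℂ := pauli2U v1 v2 with hVdef
    have hneg : ∀ U : Matrix.unitaryGroup (Fin 4) ℂ, f (V * U) = -f U := by
      intro U
      have hcoe : ((V * U : Matrix.unitaryGroup (Fin 4) ℂ) : Matrix (Fin 4) (Fin 4) ℂ) =
          pauli2 v1 v2 * (U : Matrix (Fin 4) (Fin 4) ℂ) := rfl
      simp only [hf, hcoe]
      rw [trace_left v1 v2 p q, trace_left v1 v2 r s]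
      linear_combination ((npauli2 p * (U : Matrix (Fin 4) (Fin 4) ℂ) * npauli2 q *
          (U : Matrix (Fin 4) (Fin 4) ℂ)ᴴ).trace *
        (npauli2 r * (U : Matrix (Fin 4) (Fin 4) ℂ) * npauli2 s *
          (U : Matrix (Fin 4) (Fin 4) ℂ)ᴴ).trace) * hv
    have hint : ∫ U, f (V * U) ∂μ = ∫ U, f U ∂μ := integral_mul_left_eq_self f V
    have hmain : ∫ U, f U ∂μ = -∫ U, f U ∂μ := by
      conv_lhs => rw [← hint]
      simp only [hneg]
      exact integral_neg f
    linear_combination hmain / 2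
  · obtain ⟨v1, v2, hv⟩ := exists_sign_left q s hqs
    haveI : μ.IsMulRightInvariant := by
      constructor
      intro g
      haveI : IsProbabilityMeasure (Measure.map (· * g) μ) :=
        Measure.isProbabilityMeasure_map ((measurable_mul_const g).aemeasurable)
      exact Measure.isHaarMeasure_eq_of_isProbabilityMeasure (Measure.map (· * g) μ) μ
    set V : Matrix.unitaryGroup (Fin 4) ℂ := pauli2U v1 v2 with hVdef
    have hneg : ∀ U : Matrix.unitaryGroup (Fin 4) ℂ, f (U * V) = -f U := by
      intro U
      have hcoe : ((U * V : Matrix.unitaryGroup (Fin 4) ℂ) : Matrix (Fin 4) (Fin 4) ℂ) =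
          (U : Matrix (Fin 4) (Fin 4) ℂ) * pauli2 v1 v2 := rfl
      simp only [hf, hcoe]
      rw [trace_right v1 v2 p q, trace_right v1 v2 r s]
      linear_combination ((npauli2 p * (U : Matrix (Fin 4) (Fin 4) ℂ) * npauli2 q *
          (U : Matrix (Fin 4) (Fin 4) ℂ)ᴴ).trace *
        (npauli2 r * (U : Matrix (Fin 4) (Fin 4) ℂ) * npauli2 s *
          (U : Matrix (Fin 4) (Fin 4) ℂ)ᴴ).trace) * hv
    have hint : ∫ U, f (U * V) ∂μ = ∫ U, f U ∂μ := integral_mul_right_eq_self f V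
    have hmain : ∫ U, f U ∂μ = -∫ U, f U ∂μ := by
      conv_lhs => rw [← hint]
      simp only [hneg]
      exact integral_neg f
    linear_combination hmain / 2
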